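/- arXiv:1912.01448 — 4 statements merged into one kernel-verified Lean document; each statement's English description precedes it below -/
import Mathlib

section
/- Setting (finite-path exponential parametrization): Let S be a finite type of states and, for each i : S, let A i be a finite type of actions with a distinguished element ω i : A i (the dependent action). Given independent action preferences a, namely a real number a i j for each i : S and each j : A i with j ≠ ω i, with Σ_{j ≠ ω i} exp(a i j) < 1 at each state i, define the completed preferences â by â i (ω i) := log(1 − Σ_{j ≠ ω i} exp(a i j)) and â i j := a i j for j ≠ ω i. Fix counters n i j : ℕ for each i : S and j : A i, and a constant c > 0, and define q(a) := c · exp(Σ_{i : S} Σ_{j : A i} â i j · n i j). Then, at any admissible a, for each i : S and j ≠ ω i, the partial derivative of q with respect to the coordinate a i j equals q(a) · (n i j − exp(â i j − â i (ω i)) · n i (ω i)). -/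
open Finset in
/-- Proposition 1 of the paper: the partial derivative of the path probability
`q a = c * exp (∑ i j, â i j * n i j)` with respect to an independent action
preference `a i j` (for `j ≠ ω i`) equals
`q a * (n i j - exp (â i j - â i (ω i)) * n i (ω i))`, where `â` is the completion
of the independent action preferences by the dependent one
`â i (ω i) = log (1 - ∑_{j ≠ ω i} exp (a i j))`. -/
theorem stmt_1 {S : Type*} [Fintype S] [DecidableEq S]
    {A : S → Type*} [∀ i, Fintype (A i)] [∀ i, DecidableEq (A i)]
    (ω : ∀ i, A i)
    (hat : (∀ i, A i → ℝ) → (∀ i, A i → ℝ))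
    (hhat : ∀ (a : ∀ i, A i → ℝ) (i : S) (j : A i),
      hat a i j = if j = ω i
        then Real.log (1 - ∑ j' ∈ univ.filter (fun j' => j' ≠ ω i), Real.exp (a i j'))
        else a i j)
    (n : ∀ i, A i → ℕ) (c : ℝ) (hc : 0 < c)
    (q : (∀ i, A i → ℝ) → ℝ)
    (hq : ∀ a : ∀ i, A i → ℝ,
      q a = c * Real.exp (∑ i, ∑ j, hat a i j * (n i j : ℝ)))
    (a : ∀ i, A i → ℝ)
    (ha : ∀ i, ∑ j' ∈ univ.filter (fun j' => j' ≠ ω i), Real.exp (a i j') < 1)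
    (i : S) (j : A i) (hj : j ≠ ω i) :
    HasDerivAt
      (fun t : ℝ => q (fun i' j' =>
        a i' j' + if (⟨i', j'⟩ : Σ s, A s) = ⟨i, j⟩ then t else 0))
      (q a * ((n i j : ℝ) -
        Real.exp (hat a i j - hat a i (ω i)) * (n i (ω i) : ℝ))) 0 := by
  classical
  set S0 : ℝ := ∑ j' ∈ univ.filter (fun j' => j' ≠ ω i), Real.exp (a i j') with hS0def
  set E : ℝ := Real.exp (a i j) with hEdef
  have hpos : 0 < 1 - S0 := by have := ha i; linarith
  have hcond : ∀ j' : A i, ((⟨i, j'⟩ : Σ s, A s) = ⟨i, j⟩) ↔ j' = j := by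
    intro j'
    constructor
    · intro h; exact eq_of_heq (Sigma.mk.inj_iff.mp h).2
    · rintro rfl; rfl
  have hcond' : ∀ (i' : S), i' ≠ i → ∀ j' : A i', ((⟨i', j'⟩ : Σ s, A s) ≠ ⟨i, j⟩) := by
    intro i' h j' hh
    exact h (congrArg Sigma.fst hh)
  have hmem : j ∈ univ.filter (fun j' => j' ≠ ω i) := by simp [hj]
  have hmem' : j ∈ (univ : Finset (A i)).erase (ω i) := by simp [hj]
  set K : ℝ := (∑ i' ∈ (univ : Finset S).erase i, ∑ j', hat a i' j' * (n i' j' : ℝ))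
      + ∑ j' ∈ (univ : Finset (A i)).erase (ω i), a i j' * (n i j' : ℝ) with hKdef
  -- key : the function equals an explicit function of t
  have key : (fun t : ℝ => q (fun i' j' =>
        a i' j' + if (⟨i', j'⟩ : Σ s, A s) = ⟨i, j⟩ then t else 0))
      = fun t : ℝ => c * Real.exp (K + t * (n i j : ℝ)
          + Real.log (1 - (S0 - E + Real.exp (a i j + t))) * (n i (ω i) : ℝ)) := by
    funext t
    set b : ∀ i', A i' → ℝ := fun i' j' =>
      a i' j' + if (⟨i', j'⟩ : Σ s, A s) = ⟨i, j⟩ then t else 0 with hbdef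
    rw [hq]
    congr 1
    -- sum over states: peel off state i
    rw [← Finset.sum_erase_add _ _ (Finset.mem_univ i)]
    have houter : ∑ i' ∈ (univ : Finset S).erase i, ∑ j', hat b i' j' * (n i' j' : ℝ)
        = ∑ i' ∈ (univ : Finset S).erase i, ∑ j', hat a i' j' * (n i' j' : ℝ) := by
      refine Finset.sum_congr rfl fun i' hi' => ?_
      have hine : i' ≠ i := (Finset.mem_erase.mp hi').1
      refine Finset.sum_congr rfl fun j' _ => ?_
      have hb : ∀ j'' : A i', b i' j'' = a i' j'' := by
        intro j''
        show a i' j'' + (if (⟨i', j''⟩ : Σ s, A s) = ⟨i, j⟩ then t else 0) = a i' j''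
        rw [if_neg (hcond' i' hine j''), add_zero]
      rw [hhat, hhat]
      simp only [hb]
    -- inner sum at state i: peel off ω i
    rw [← Finset.add_sum_erase _ _ (Finset.mem_univ (ω i))]
    have hbω : hat b i (ω i) = Real.log (1 - (S0 - E + Real.exp (a i j + t))) := by
      rw [hhat, if_pos rfl]
      congr 2
      have hsum : ∑ j' ∈ univ.filter (fun j' => j' ≠ ω i), Real.exp (b i j')
          = S0 - E + Real.exp (a i j + t) := by
        rw [hS0def, ← Finset.add_sum_erase _ _ hmem, ← Finset.add_sum_erase _ _ hmem]
        have h1 : b i j = a i j + t := by simp [hbdef, hcond]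
        have h2 : ∑ j' ∈ (univ.filter (fun j' => j' ≠ ω i)).erase j, Real.exp (b i j')
            = ∑ j' ∈ (univ.filter (fun j' => j' ≠ ω i)).erase j, Real.exp (a i j') := by
          refine Finset.sum_congr rfl fun j' hj' => ?_
          have : j' ≠ j := (Finset.mem_erase.mp hj').1
          simp [hbdef, hcond, this]
        rw [h1, h2, hEdef]
        ring
      rw [hsum]
    have hrest : ∑ j' ∈ (univ : Finset (A i)).erase (ω i), hat b i j' * (n i j' : ℝ)
        = (∑ j' ∈ (univ : Finset (A i)).erase (ω i), a i j' * (n i j' : ℝ)) + t * (n i j : ℝ) := by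
      have hterm : ∀ j' ∈ (univ : Finset (A i)).erase (ω i),
          hat b i j' * (n i j' : ℝ)
            = a i j' * (n i j' : ℝ) + (if j' = j then t * (n i j' : ℝ) else 0) := by
        intro j' hj'
        have hne : j' ≠ ω i := (Finset.mem_erase.mp hj').1
        rw [hhat, if_neg hne, hbdef]
        simp only [hcond]
        by_cases h : j' = j <;> simp [h] <;> ring
      rw [Finset.sum_congr rfl hterm, Finset.sum_add_distrib, Finset.sum_ite_eq' _ j, if_pos hmem']
    rw [houter, hbω, hrest, hKdef]
    congr 1
    ring
  rw [key]
  -- q a in explicit form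
  have ha0 : (fun i' j' => a i' j' + if (⟨i', j'⟩ : Σ s, A s) = ⟨i, j⟩ then (0:ℝ) else 0) = a := by
    funext i' j'; simp
  have hqa : q a = c * Real.exp (K + Real.log (1 - S0) * (n i (ω i) : ℝ)) := by
    have := congrFun key 0
    rw [ha0] at this
    rw [this]
    norm_num [hEdef]
  -- derivatives
  have h1 : HasDerivAt (fun t : ℝ => K + t * (n i j : ℝ)) ((n i j : ℝ)) 0 := by
    simpa using ((hasDerivAt_id (0:ℝ)).mul_const ((n i j : ℝ))).const_add K
  have h2 : HasDerivAt (fun t : ℝ => Real.exp (a i j + t)) E 0 := by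
    have := ((hasDerivAt_id (0:ℝ)).const_add (a i j)).exp
    simpa [hEdef] using this
  have h3 : HasDerivAt (fun t : ℝ => 1 - (S0 - E + Real.exp (a i j + t))) (-E) 0 := by
    have := (h2.const_add (S0 - E)).const_sub 1
    simpa using this
  have h4 : (1 : ℝ) - (S0 - E + Real.exp (a i j + 0)) ≠ 0 := by
    rw [add_zero, ← hEdef]
    have : S0 - E + E = S0 := by ring
    rw [this]
    exact hpos.ne'
  have h5 := h3.log h4
  have h6 : HasDerivAt (fun t : ℝ => Real.log (1 - (S0 - E + Real.exp (a i j + t))))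
      (-E / (1 - S0)) 0 := by
    convert h5 using 1
    rw [add_zero, ← hEdef]
    have : S0 - E + E = S0 := by ring
    rw [this]
  have h7 := ((h1.add (h6.mul_const ((n i (ω i) : ℝ)))).exp).const_mul c
  convert h7 using 1
  case e'_4 => rfl
  case e'_5 => rfl
  case e'_8 => rfl
  have hval : K + 0 * (n i j : ℝ)
      + Real.log (1 - (S0 - E + Real.exp (a i j + 0))) * (n i (ω i) : ℝ)
      = K + Real.log (1 - S0) * (n i (ω i) : ℝ) := by
    rw [add_zero, ← hEdef]
    have : S0 - E + E = S0 := by ring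
    rw [this]; ring
  simp only [Pi.add_apply]
  rw [hval, hqa]
  have hhat1 : hat a i j = a i j := by rw [hhat, if_neg hj]
  have hhat2 : hat a i (ω i) = Real.log (1 - S0) := by rw [hhat, if_pos rfl, ← hS0def]
  rw [hhat1, hhat2, Real.exp_sub, Real.exp_log hpos, ← hEdef]
  ring
end

section
/- Setting (finite-path exponential parametrization): Let S be a finite type of states and, for each i : S, let A i be a finite type of actions with a distinguished element ω i : A i (the dependent action). Given independent action preferences a, namely a real number a i j for each i : S and each j : A i with j ≠ ω i, with Σ_{j ≠ ω i} exp(a i j) < 1 at each state i, define the completed preferences â by â i (ω i) := log(1 − Σ_{j ≠ ω i} exp(a i j)) and â i j := a i j for j ≠ ω i. Let T be a finite type of paths; for each τ : T let n τ i j : ℕ be the number of occurrences of state-action (i,j) in τ and c τ > 0 a fixed positive real, and set q(a, τ) := c τ · exp(Σ_{i : S} Σ_{j : A i} â i j · n τ i j). Fix rewards R k l : ℝ for each k : S, l : A k, set V(τ) := Σ_{k,l} n τ k l · R k l and J(a) := Σ_{τ : T} q(a, τ) · V(τ), and define the counter correlations C_{i j, k l}(a) := Σ_{τ : T} q(a,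 τ) · n τ i j · n τ k l. Then for every admissible a, every i : S and every j ≠ ω i, the partial derivative of J with respect to the coordinate a i j equals Σ_{k : S} Σ_{l : A k} [ C_{i j, k l}(a) − exp(â i j − â i (ω i)) · C_{i (ω i), k l}(a) ] · R k l. -/
open Finset in
/-- Theorem 1 of the paper (model-based policy path gradient): for finitely many paths
with probabilities `q a τ = c τ * exp (∑ i j, â i j * n τ i j)`, rewards
`V τ = ∑ k l, n τ k l * R k l`, objective `J a = ∑ τ, q a τ * V τ`, and counter
correlations `C a i j k l = ∑ τ, q a τ * n τ i j * n τ k l`, the partial derivative of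
`J` with respect to the independent action preference `a i j` equals
`∑ k l, (C a i j k l - exp (â i j - â i (ω i)) * C a i (ω i) k l) * R k l`. -/
theorem stmt_3 {S : Type*} [Fintype S] [DecidableEq S]
    {A : S → Type*} [∀ i, Fintype (A i)] [∀ i, DecidableEq (A i)]
    (ω : ∀ i, A i)
    (hat : (∀ i, A i → ℝ) → (∀ i, A i → ℝ))
    (hhat : ∀ (a : ∀ i, A i → ℝ) (i : S) (j : A i),
      hat a i j = if j = ω i
        then Real.log (1 - ∑ j' ∈ univ.filter (fun j' => j' ≠ ω i), Real.exp (a i j'))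
        else a i j)
    {T : Type*} [Fintype T]
    (n : T → ∀ i, A i → ℕ) (c : T → ℝ) (hc : ∀ τ, 0 < c τ)
    (q : (∀ i, A i → ℝ) → T → ℝ)
    (hq : ∀ (a : ∀ i, A i → ℝ) (τ : T),
      q a τ = c τ * Real.exp (∑ i, ∑ j, hat a i j * (n τ i j : ℝ)))
    (R : ∀ k, A k → ℝ)
    (V : T → ℝ)
    (hV : ∀ τ, V τ = ∑ k, ∑ l, (n τ k l : ℝ) * R k l)
    (J : (∀ i, A i → ℝ) → ℝ)
    (hJ : ∀ a, J a = ∑ τ : T, q a τ * V τ)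
    (C : (∀ i, A i → ℝ) → ∀ i, A i → ∀ k, A k → ℝ)
    (hC : ∀ (a : ∀ i, A i → ℝ) (i : S) (j : A i) (k : S) (l : A k),
      C a i j k l = ∑ τ : T, q a τ * (n τ i j : ℝ) * (n τ k l : ℝ))
    (a : ∀ i, A i → ℝ)
    (ha : ∀ i, ∑ j' ∈ univ.filter (fun j' => j' ≠ ω i), Real.exp (a i j') < 1)
    (i : S) (j : A i) (hj : j ≠ ω i) :
    HasDerivAt
      (fun t : ℝ => J (fun i' j' =>
        a i' j' + if (⟨i', j'⟩ : Σ s, A s) = ⟨i, j⟩ then t else 0))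
      (∑ k, ∑ l,
        (C a i j k l - Real.exp (hat a i j - hat a i (ω i)) * C a i (ω i) k l) * R k l)
      0 := by
  have hS0lt : (∑ j' ∈ Finset.univ.filter (fun j' => j' ≠ ω i), Real.exp (a i j')) < 1 := ha i
  set S0 : ℝ := ∑ j' ∈ Finset.univ.filter (fun j' => j' ≠ ω i), Real.exp (a i j') with hS0def
  have hS0pos : 0 < 1 - S0 := by linarith
  set K : ℝ := Real.exp (a i j) / (1 - S0) with hKdef
  have hKeq : Real.exp (hat a i j - hat a i (ω i)) = K := by
    rw [hhat a i j, hhat a i (ω i), if_neg hj, if_pos rfl, Real.exp_sub, ← hS0def,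
      Real.exp_log hS0pos, hKdef]
  set aT : ℝ → ∀ i', A i' → ℝ := fun t i' j' =>
    a i' j' + if (⟨i', j'⟩ : Σ s, A s) = ⟨i, j⟩ then t else 0 with haTdef
  have haT0 : aT 0 = a := by funext i' j'; simp [aT]
  have haTne : ∀ (t : ℝ) (i' : S), i' ≠ i → ∀ j' : A i', aT t i' j' = a i' j' := by
    intro t i' hi' j'; simp [aT, Sigma.mk.inj_iff, hi']
  have haTi : ∀ (t : ℝ) (j' : A i), aT t i j' = a i j' + if j' = j then t else 0 := by
    intro t j'; simp [aT, Sigma.mk.inj_iff]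
  -- derivative of the sum appearing inside the log at state i
  have hG : HasDerivAt
      (fun t => ∑ j' ∈ Finset.univ.filter (fun j' => j' ≠ ω i),
        Real.exp (a i j' + if j' = j then t else 0)) (Real.exp (a i j)) 0 := by
    have h := HasDerivAt.fun_sum (u := Finset.univ.filter (fun j' => j' ≠ ω i)) (x := (0:ℝ))
      (A := fun j' t => Real.exp (a i j' + if j' = j then t else 0))
      (A' := fun j' => if j' = j then Real.exp (a i j) else 0)
      (fun j' _ => by
        by_cases hjj : j' = j
        · subst hjj
          simp only [if_pos rfl]
          have h1 : HasDerivAt (fun t : ℝ => a i j' + t) 1 0 :=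
            (hasDerivAt_id 0).const_add _
          simpa using h1.exp
        · simp only [hjj, if_false]
          simpa using hasDerivAt_const (0:ℝ) (Real.exp (a i j' + 0)))
    have hv : (∑ j' ∈ Finset.univ.filter (fun j' => j' ≠ ω i),
        if j' = j then Real.exp (a i j) else 0) = Real.exp (a i j) := by
      simp [Finset.sum_ite_eq', hj]
    rwa [hv] at h
  have hG0 : (∑ j' ∈ Finset.univ.filter (fun j' => j' ≠ ω i),
      Real.exp (a i j' + if j' = j then (0:ℝ) else 0)) = S0 := by
    rw [hS0def]; exact Finset.sum_congr rfl fun j' _ => by simp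
  -- per-state derivative of the inner sums
  have hFder : ∀ (τ : T) (i' : S),
      HasDerivAt (fun t => ∑ j', hat (aT t) i' j' * (n τ i' j' : ℝ))
        (if i' = i then ((n τ i j : ℝ) - K * (n τ i (ω i) : ℝ)) else 0) 0 := by
    intro τ i'
    by_cases hii : i' = i
    · subst hii
      rw [if_pos rfl]
      have hfun : (fun t => ∑ j', hat (aT t) i' j' * (n τ i' j' : ℝ)) =
          fun t => Real.log (1 - ∑ j' ∈ Finset.univ.filter (fun j' => j' ≠ ω i'),
              Real.exp (a i' j' + if j' = j then t else 0)) * (n τ i' (ω i') : ℝ) +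
            ∑ j' ∈ Finset.univ.erase (ω i'),
              (a i' j' + if j' = j then t else 0) * (n τ i' j' : ℝ) := by
        funext t
        rw [← Finset.add_sum_erase _ _ (Finset.mem_univ (ω i'))]
        congr 1
        · rw [hhat, if_pos rfl]
          have hss : (∑ j'' ∈ Finset.univ.filter (fun j'' => j'' ≠ ω i'),
              Real.exp (aT t i' j'')) = ∑ j'' ∈ Finset.univ.filter (fun j'' => j'' ≠ ω i'),
              Real.exp (a i' j'' + if j'' = j then t else 0) :=
            Finset.sum_congr rfl fun j'' _ => by rw [haTi]
          rw [hss]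
        · exact Finset.sum_congr rfl fun j' hj' => by
            rw [hhat, if_neg (Finset.mem_erase.mp hj').1, haTi]
      rw [hfun]
      have h1 : HasDerivAt
          (fun t => Real.log (1 - ∑ j' ∈ Finset.univ.filter (fun j' => j' ≠ ω i'),
            Real.exp (a i' j' + if j' = j then t else 0)) * (n τ i' (ω i') : ℝ))
          (-Real.exp (a i' j) / (1 - S0) * (n τ i' (ω i') : ℝ)) 0 := by
        have hsub := hG.const_sub 1
        have hlog := hsub.log (by rw [hG0]; exact ne_of_gt hS0pos)
        rw [hG0] at hlog
        exact hlog.mul_const _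
      have h2 : HasDerivAt
          (fun t => ∑ j' ∈ Finset.univ.erase (ω i'),
            (a i' j' + if j' = j then t else 0) * (n τ i' j' : ℝ))
          ((n τ i' j : ℝ)) 0 := by
        have h := HasDerivAt.fun_sum (u := Finset.univ.erase (ω i')) (x := (0:ℝ))
          (A := fun j' t => (a i' j' + if j' = j then t else 0) * (n τ i' j' : ℝ))
          (A' := fun j' => if j' = j then (n τ i' j' : ℝ) else 0)
          (fun j' _ => by
            by_cases hjj : j' = j
            · subst hjj
              simp only [if_pos rfl]
              simpa using ((hasDerivAt_id 0).const_add (a i' j')).mul_const ((n τ i' j' : ℝ))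
            · simp only [hjj, if_false]
              simpa using hasDerivAt_const (0:ℝ) ((a i' j' + 0) * (n τ i' j' : ℝ)))
        have hv : (∑ j' ∈ Finset.univ.erase (ω i'),
            if j' = j then (n τ i' j' : ℝ) else 0) = (n τ i' j : ℝ) := by
          simp [Finset.sum_ite_eq', hj]
        rwa [hv] at h
      have := h1.fun_add h2
      refine this.congr_deriv ?_
      rw [hKdef]; ring
    · rw [if_neg hii]
      have hfun : (fun t => ∑ j', hat (aT t) i' j' * (n τ i' j' : ℝ)) =
          fun _ => ∑ j', hat a i' j' * (n τ i' j' : ℝ) := by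
        funext t
        refine Finset.sum_congr rfl fun j' _ => ?_
        rw [hhat, hhat]
        split_ifs with h
        · have hss : (∑ j'' ∈ Finset.univ.filter (fun j'' => j'' ≠ ω i'),
              Real.exp (aT t i' j'')) = ∑ j'' ∈ Finset.univ.filter (fun j'' => j'' ≠ ω i'),
              Real.exp (a i' j'') :=
            Finset.sum_congr rfl fun j'' _ => by rw [haTne t i' hii]
          rw [hss]
        · rw [haTne t i' hii]
      rw [hfun]
      exact hasDerivAt_const _ _
  -- per-path derivative
  have hEder : ∀ τ : T,
      HasDerivAt (fun t => ∑ i', ∑ j', hat (aT t) i' j' * (n τ i' j' : ℝ))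
        ((n τ i j : ℝ) - K * (n τ i (ω i) : ℝ)) 0 := by
    intro τ
    have h := HasDerivAt.fun_sum (u := (Finset.univ : Finset S)) (x := (0:ℝ))
      (A := fun i' t => ∑ j', hat (aT t) i' j' * (n τ i' j' : ℝ))
      (A' := fun i' => if i' = i then ((n τ i j : ℝ) - K * (n τ i (ω i) : ℝ)) else 0)
      (fun i' _ => hFder τ i')
    simpa using h
  -- derivative of each summand of J
  have hqV : ∀ τ : T, HasDerivAt
      (fun t => c τ * Real.exp (∑ i', ∑ j', hat (aT t) i' j' * (n τ i' j' : ℝ)) * V τ)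
      (q a τ * ((n τ i j : ℝ) - K * (n τ i (ω i) : ℝ)) * V τ) 0 := by
    intro τ
    have h := (((hEder τ).exp).const_mul (c τ)).mul_const (V τ)
    have hq0 : q a τ = c τ * Real.exp (∑ i', ∑ j', hat (aT 0) i' j' * (n τ i' j' : ℝ)) := by
      rw [haT0, hq]
    refine h.congr_deriv ?_
    rw [hq0]; ring
  -- assemble the derivative of J
  have hJfun : (fun t : ℝ => J (fun i' j' =>
      a i' j' + if (⟨i', j'⟩ : Σ s, A s) = ⟨i, j⟩ then t else 0)) =
      fun t => ∑ τ : T,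
        c τ * Real.exp (∑ i', ∑ j', hat (aT t) i' j' * (n τ i' j' : ℝ)) * V τ := by
    funext t
    rw [hJ]
    exact Finset.sum_congr rfl fun τ _ => by rw [hq]
  rw [hJfun]
  have hder := HasDerivAt.fun_sum (u := (Finset.univ : Finset T)) (x := (0:ℝ))
    (A := fun τ t => c τ * Real.exp (∑ i', ∑ j', hat (aT t) i' j' * (n τ i' j' : ℝ)) * V τ)
    (A' := fun τ => q a τ * ((n τ i j : ℝ) - K * (n τ i (ω i) : ℝ)) * V τ)
    (fun τ _ => hqV τ)
  refine hder.congr_deriv ?_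
  symm
  -- final algebraic identity
  rw [hKeq]
  have key1 : ∀ (kk : S) (ll : A kk),
      (C a i j kk ll - K * C a i (ω i) kk ll) * R kk ll
        = ∑ τ : T, q a τ * ((n τ i j : ℝ) - K * (n τ i (ω i) : ℝ))
            * ((n τ kk ll : ℝ) * R kk ll) := by
    intro kk ll
    rw [hC, hC, Finset.mul_sum, ← Finset.sum_sub_distrib, Finset.sum_mul]
    exact Finset.sum_congr rfl fun τ _ => by ring
  calc (∑ k, ∑ l, (C a i j k l - K * C a i (ω i) k l) * R k l)
      = ∑ k, ∑ l, ∑ τ : T, q a τ * ((n τ i j : ℝ) - K * (n τ i (ω i) : ℝ))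
          * ((n τ k l : ℝ) * R k l) :=
        Finset.sum_congr rfl fun kk _ => Finset.sum_congr rfl fun ll _ => key1 kk ll
    _ = ∑ k, ∑ τ : T, ∑ l, q a τ * ((n τ i j : ℝ) - K * (n τ i (ω i) : ℝ))
          * ((n τ k l : ℝ) * R k l) :=
        Finset.sum_congr rfl fun kk _ => Finset.sum_comm
    _ = ∑ τ : T, ∑ k, ∑ l, q a τ * ((n τ i j : ℝ) - K * (n τ i (ω i) : ℝ))
          * ((n τ k l : ℝ) * R k l) := Finset.sum_comm
    _ = ∑ τ : T, q a τ * ((n τ i j : ℝ) - K * (n τ i (ω i) : ℝ)) * V τ := by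
        refine Finset.sum_congr rfl fun τ _ => ?_
        rw [hV, Finset.mul_sum]
        exact Finset.sum_congr rfl fun kk _ => by rw [Finset.mul_sum]
end

section
/- Let ι be a finite type with a distinguished element 0 : ι, let M : Matrix ι ι ℝ have nonnegative entries with every row sum at most λ for some 0 ≤ λ < 1, and let D := (1 − M)⁻¹ = Σ_{t=0}^∞ M^t. Fix i, k : ι and define g : ℕ × ℕ → ℝ by g(t, t') := (M^t)_{0 i} · (M^{t'−t})_{i k} if t ≤ t', and g(t, t') := (M^{t'})_{0 k} · (M^{t−t'})_{k i} if t' < t. Then g is summable over ℕ × ℕ and Σ_{(t,t') : ℕ × ℕ} g(t, t') = D_{0 i} · D_{i k} + D_{0 k} · D_{k i} − D_{0 i} · (if i = k then 1 else 0). -/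
set_option maxHeartbeats 1000000


/-- Second moment of visit counts through the successor representation: for a
substochastic matrix `M` started at state `o`, the joint occupation probabilities
`g (t, t')` are summable and their total sum equals
`D_{o i} * D_{i k} + D_{o k} * D_{k i} - D_{o i} * δ_{i k}` where `D = (1 - M)⁻¹`. -/
theorem stmt_8 {ι : Type*} [Fintype ι] [DecidableEq ι]
    (o : ι)
    (M : Matrix ι ι ℝ)
    (hM_nonneg : ∀ i k, 0 ≤ M i k)
    (lam : ℝ) (hlam0 : 0 ≤ lam) (hlam1 : lam < 1)
    (hM_row : ∀ i, ∑ k, M i k ≤ lam)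
    (D : Matrix ι ι ℝ) (hD : D = (1 - M)⁻¹)
    (hD' : D = ∑' t : ℕ, M ^ t)
    (i k : ι)
    (g : ℕ × ℕ → ℝ)
    (hg : ∀ t t' : ℕ, g (t, t') =
      if t ≤ t' then (M ^ t) o i * (M ^ (t' - t)) i k
      else (M ^ t') o k * (M ^ (t - t')) k i) :
    Summable g ∧
    ∑' p : ℕ × ℕ, g p =
      D o i * D i k + D o k * D k i - D o i * (if i = k then 1 else 0) := by
  -- entries of powers are nonnegative
  have hpow_nonneg : ∀ (t : ℕ) (x y : ι), 0 ≤ (M ^ t) x y := by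
    intro t
    induction t with
    | zero => intro x y; simp [Matrix.one_apply]; positivity
    | succ n ih =>
      intro x y
      rw [pow_succ, Matrix.mul_apply]
      exact Finset.sum_nonneg fun z _ => mul_nonneg (ih x z) (hM_nonneg z y)
  -- row sums of powers bounded by lam ^ t
  have hrow : ∀ (t : ℕ) (x : ι), ∑ y, (M ^ t) x y ≤ lam ^ t := by
    intro t
    induction t with
    | zero =>
      intro x
      simp [Matrix.one_apply]
    | succ n ih =>
      intro x
      rw [pow_succ]
      calc ∑ y, (M ^ n * M) x y = ∑ z, (M ^ n) x z * ∑ y, M z y := by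
            simp only [Matrix.mul_apply]
            rw [Finset.sum_comm]
            simp [Finset.mul_sum]
        _ ≤ ∑ z, (M ^ n) x z * lam :=
            Finset.sum_le_sum fun z _ =>
              mul_le_mul_of_nonneg_left (hM_row z) (hpow_nonneg n x z)
        _ = (∑ z, (M ^ n) x z) * lam := by rw [Finset.sum_mul]
        _ ≤ lam ^ n * lam := mul_le_mul_of_nonneg_right (ih x) hlam0
  -- each entry is bounded by lam ^ t
  have hent : ∀ (t : ℕ) (x y : ι), (M ^ t) x y ≤ lam ^ t := by
    intro t x y
    calc (M ^ t) x y ≤ ∑ z, (M ^ t) x z :=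
          Finset.single_le_sum (fun z _ => hpow_nonneg t x z) (Finset.mem_univ y)
      _ ≤ lam ^ t := hrow t x
  -- entrywise summability
  have hsum : ∀ x y : ι, Summable (fun t : ℕ => (M ^ t) x y) := by
    intro x y
    exact Summable.of_nonneg_of_le (fun t => hpow_nonneg t x y) (fun t => hent t x y)
      (summable_geometric_of_lt_one hlam0 hlam1)
  -- summability of the matrix-valued series
  have hsumM1 : ∀ x : ι, Summable (fun t : ℕ => (M ^ t) x) := by
    intro x
    exact Pi.summable.mpr fun y => hsum x y
  have hsumM : Summable (fun t : ℕ => M ^ t) := Pi.summable.mpr hsumM1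
  -- D entries are the entrywise sums
  have hDxy : ∀ x y : ι, D x y = ∑' t : ℕ, (M ^ t) x y := by
    intro x y
    rw [hD']
    rw [show (∑' t : ℕ, M ^ t) x y = ((∑' t : ℕ, M ^ t) x) y from rfl]
    exact (congrFun (tsum_apply hsumM : (∑' t : ℕ, M ^ t) x = _) y).trans (tsum_apply (hsumM1 x))
  -- abbreviations
  set a : ℕ → ℝ := fun t => (M ^ t) o i with ha
  set b : ℕ → ℝ := fun s => (M ^ s) i k with hb
  set c : ℕ → ℝ := fun t => (M ^ t) o k with hc
  set d : ℕ → ℝ := fun s => (M ^ s) k i with hd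
  -- the upper-triangular region
  set S : Set (ℕ × ℕ) := {p | p.1 ≤ p.2} with hS
  let e1 : (ℕ × ℕ) ≃ S :=
    { toFun := fun ts => ⟨(ts.1, ts.1 + ts.2), by simp [hS]⟩
      invFun := fun p => (p.1.1, p.1.2 - p.1.1)
      left_inv := fun ts => by simp
      right_inv := fun p => by
        have hp := p.2
        simp only [hS, Set.mem_setOf_eq] at hp
        ext <;> simp <;> omega }
  let e2 : (ℕ × ℕ) ≃ (Sᶜ : Set (ℕ × ℕ)) :=
    { toFun := fun ts => ⟨(ts.1 + ts.2 + 1, ts.1), by simp [hS]⟩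
      invFun := fun p => (p.1.2, p.1.1 - p.1.2 - 1)
      left_inv := fun ts => by simp [Prod.ext_iff]; omega
      right_inv := fun p => by
        have hp := p.2
        simp only [hS, Set.mem_compl_iff, Set.mem_setOf_eq, not_le] at hp
        ext <;> simp <;> omega }
  -- HasSum on the two regions
  have hab : HasSum (fun ts : ℕ × ℕ => a ts.1 * b ts.2) ((∑' t, a t) * ∑' s, b s) :=
    (hsum o i).hasSum.mul (hsum i k).hasSum
      ((hsum o i).mul_of_nonneg (hsum i k) (fun t => hpow_nonneg t o i)
        fun s => hpow_nonneg s i k)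
  have hd' : HasSum (fun s : ℕ => d (s + 1)) ((∑' s, d s) - d 0) := by
    have := (hasSum_nat_add_iff' (f := d) 1).mpr (hsum k i).hasSum
    simpa using this
  have hcd : HasSum (fun ts : ℕ × ℕ => c ts.1 * d (ts.2 + 1))
      ((∑' t, c t) * ((∑' s, d s) - d 0)) := by
    have hsd : Summable (fun s : ℕ => d (s + 1)) := hd'.summable
    exact HasSum.mul (f := c) (g := fun s => d (s + 1)) (hsum o k).hasSum hd'
      ((hsum o k).mul_of_nonneg hsd (fun t => hpow_nonneg t o k)
        fun s => hpow_nonneg (s + 1) k i)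
  -- transfer to the subtype sums
  have h1 : HasSum (fun p : S => g p) ((∑' t, a t) * ∑' s, b s) := by
    rw [← e1.hasSum_iff]
    convert hab using 1
    funext ts
    simp only [e1, Function.comp_apply, Equiv.coe_fn_mk]
    rw [hg]
    simp [ha, hb]
  have h2 : HasSum (fun p : (Sᶜ : Set (ℕ × ℕ)) => g p)
      ((∑' t, c t) * ((∑' s, d s) - d 0)) := by
    rw [← e2.hasSum_iff]
    convert hcd using 1
    funext ts
    simp only [e2, Function.comp_apply, Equiv.coe_fn_mk]
    rw [hg]
    have hnle : ¬ ts.1 + ts.2 + 1 ≤ ts.1 := by omega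
    rw [if_neg hnle]
    have : ts.1 + ts.2 + 1 - ts.1 = ts.2 + 1 := by omega
    rw [this]
  -- combine
  have hg' : HasSum g
      ((∑' t, a t) * (∑' s, b s) + (∑' t, c t) * ((∑' s, d s) - d 0)) :=
    HasSum.add_isCompl isCompl_compl h1 h2
  refine ⟨hg'.summable, ?_⟩
  rw [hg'.tsum_eq, hDxy o i, hDxy i k, hDxy o k, hDxy k i]
  have hd0 : d 0 = if k = i then 1 else 0 := by
    simp [hd, Matrix.one_apply]
  rw [hd0]
  by_cases hik : i = k
  · subst hik
    simp [ha, hc]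
    ring
  · have hki : ¬ k = i := fun h => hik h.symm
    rw [if_neg hki, if_neg hik]
    ring
end

section
/- Let S be a finite type of states with a distinguished start state 0 : S, and for each i : S let A i be a finite type of actions. Let π i j ≥ 0 with Σ_{j : A i} π i j = 1 for each i (a stochastic policy), and let p i j k ≥ 0 with Σ_{k : S} p i j k ≤ λ for every i, j, for some 0 ≤ λ < 1 (a substochastic environment dynamics with discount embedded). Define the induced state transition matrix T_{i k} := Σ_{j : A i} π i j · p i j k, the successor representation D := (1 − T)⁻¹, and E_{(i j) k} := Σ_{k' : S} p i j k' · D_{k' k}. Fix i, k : S, j : A i, l : A k and define g : ℕ × ℕ → ℝ by: g(t, t) := (T^t)_{0 i} · π i j if i = k and j = l, and 0 otherwise; for t < t', g(t, t') := (T^t)_{0 i} · π i j · (Σ_{k' : S} p i j k' · (T^{t'−t−1})_{k' k}) · π k l; and for t' < t, g(t, t') := (T^{t'})_{0 k} · π k l · (Σ_{k' : S} p k l k' · (T^{t−t'−1})_{k' i}) · π i j. Then g is summable over ℕ × ℕ and Σ_{(t,t')} g(t, t') = D_{0 i} · π i j · (if i = k ∧ j = l then 1 else 0) + (D_{0 i}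 · E_{(i j) k} + D_{0 k} · E_{(k l) i}) · π i j · π k l. -/
set_option maxHeartbeats 1000000 in
/-- Closed form of the state-action counter correlations used in the HIMO algorithm:
`C_{ij,kl} = D_{0i} π_{ij} δ_{ik} δ_{jl} + [D_{0i} E_{(ij)k} + D_{0k} E_{(kl)i}] π_{ij} π_{kl}`
where `D = (1 - T)⁻¹` is the successor representation of the induced state chain
`T i k = ∑ j, π i j * p i j k` and `E_{(ij)k} = ∑ k', p i j k' * D_{k' k}`. -/
theorem stmt_9 {S : Type*} [Fintype S] [DecidableEq S]
    {A : S → Type*} [∀ i, Fintype (A i)] [∀ i, DecidableEq (A i)]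
    (o : S)
    (π : ∀ i, A i → ℝ)
    (hπ_nonneg : ∀ (i : S) (j : A i), 0 ≤ π i j)
    (hπ_sum : ∀ i : S, ∑ j, π i j = 1)
    (p : ∀ i, A i → S → ℝ)
    (hp_nonneg : ∀ (i : S) (j : A i) (k : S), 0 ≤ p i j k)
    (lam : ℝ) (hlam0 : 0 ≤ lam) (hlam1 : lam < 1)
    (hp_sum : ∀ (i : S) (j : A i), ∑ k, p i j k ≤ lam)
    (T : Matrix S S ℝ)
    (hT : ∀ i k : S, T i k = ∑ j, π i j * p i j k)
    (D : Matrix S S ℝ) (hD : D = (1 - T)⁻¹)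
    (E : ∀ i, A i → S → ℝ)
    (hE : ∀ (i : S) (j : A i) (k : S), E i j k = ∑ k', p i j k' * D k' k)
    (i : S) (j : A i) (k : S) (l : A k)
    (g : ℕ × ℕ → ℝ)
    (hg : ∀ t t' : ℕ, g (t, t') =
      if t = t' then
        (if (⟨i, j⟩ : Σ s, A s) = ⟨k, l⟩ then (T ^ t) o i * π i j else 0)
      else if t < t' then
        (T ^ t) o i * π i j * (∑ k', p i j k' * (T ^ (t' - t - 1)) k' k) * π k l
      else
        (T ^ t') o k * π k l * (∑ k', p k l k' * (T ^ (t - t' - 1)) k' i) * π i j) :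
    Summable g ∧
    ∑' q : ℕ × ℕ, g q =
      D o i * π i j * (if (⟨i, j⟩ : Σ s, A s) = ⟨k, l⟩ then 1 else 0) +
      (D o i * E i j k + D o k * E k l i) * π i j * π k l := by
  -- ## Preliminaries: entries of `T ^ t` are nonnegative and bounded by `lam ^ t`
  have hTnn : ∀ a b : S, 0 ≤ T a b := fun a b => by
    rw [hT]; exact Finset.sum_nonneg fun j' _ => mul_nonneg (hπ_nonneg a j') (hp_nonneg a j' b)
  have hTrow : ∀ a : S, ∑ b, T a b ≤ lam := fun a => by
    have h1 : ∑ b, T a b = ∑ j', π a j' * ∑ b, p a j' b := by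
      simp_rw [hT, Finset.mul_sum]; rw [Finset.sum_comm]
    rw [h1]
    calc ∑ j', π a j' * ∑ b, p a j' b ≤ ∑ j', π a j' * lam :=
          Finset.sum_le_sum fun j' _ => mul_le_mul_of_nonneg_left (hp_sum a j') (hπ_nonneg a j')
      _ = lam := by rw [← Finset.sum_mul, hπ_sum, one_mul]
  have hPnn : ∀ (t : ℕ) (a b : S), 0 ≤ (T ^ t) a b := by
    intro t
    induction t with
    | zero => intro a b; simp only [pow_zero, Matrix.one_apply]; split <;> norm_num
    | succ n ih =>
      intro a b
      rw [pow_succ, Matrix.mul_apply]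
      exact Finset.sum_nonneg fun c _ => mul_nonneg (ih a c) (hTnn c b)
  have hProw : ∀ (t : ℕ) (a : S), ∑ b, (T ^ t) a b ≤ lam ^ t := by
    intro t
    induction t with
    | zero => intro a; simp [Matrix.one_apply]
    | succ n ih =>
      intro a
      rw [pow_succ]
      have h1 : ∑ b, (T ^ n * T) a b = ∑ c, (T ^ n) a c * ∑ b, T c b := by
        simp_rw [Matrix.mul_apply, Finset.mul_sum]; rw [Finset.sum_comm]
      rw [h1]
      calc ∑ c, (T ^ n) a c * ∑ b, T c b ≤ ∑ c, (T ^ n) a c * lam :=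
            Finset.sum_le_sum fun c _ => mul_le_mul_of_nonneg_left (hTrow c) (hPnn n a c)
        _ = (∑ c, (T ^ n) a c) * lam := (Finset.sum_mul _ _ _).symm
        _ ≤ lam ^ n * lam := mul_le_mul_of_nonneg_right (ih a) hlam0
  have hPentry : ∀ (t : ℕ) (a b : S), (T ^ t) a b ≤ lam ^ t := fun t a b =>
    (Finset.single_le_sum (fun c _ => hPnn t a c) (Finset.mem_univ b)).trans (hProw t a)
  have hSumP : ∀ a b : S, Summable fun t : ℕ => (T ^ t) a b := fun a b =>
    (summable_geometric_of_lt_one hlam0 hlam1).of_nonneg_of_le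
      (fun t => hPnn t a b) (fun t => hPentry t a b)
  -- ## `D` is the entrywise sum of the powers of `T`
  set M : Matrix S S ℝ := Matrix.of fun a b => ∑' t : ℕ, (T ^ t) a b with hMdef
  have hMT : (1 - T) * M = 1 := by
    ext a b
    rw [Matrix.sub_mul, Matrix.one_mul, Matrix.sub_apply]
    have h1 : (T * M) a b = ∑' t : ℕ, (T ^ (t + 1)) a b := by
      rw [Matrix.mul_apply]
      have h2 : ∀ c : S, T a c * ∑' t : ℕ, (T ^ t) c b = ∑' t : ℕ, T a c * (T ^ t) c b :=
        fun c => (tsum_mul_left).symm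
      simp_rw [hMdef, Matrix.of_apply]
      rw [Finset.sum_congr rfl fun c _ => h2 c,
        ← Summable.tsum_finsetSum fun c _ => (hSumP c b).mul_left (T a c)]
      exact tsum_congr fun t => by rw [pow_succ', Matrix.mul_apply]
    rw [h1, hMdef, Matrix.of_apply, Summable.tsum_eq_zero_add (hSumP a b)]
    simp [Matrix.one_apply]
  have hDM : ∀ a b : S, D a b = ∑' t : ℕ, (T ^ t) a b := by
    rw [hD, Matrix.inv_eq_right_inv hMT]
    intro a b; rfl
  -- ## The three pieces of `g`
  set c : Prop := (⟨i, j⟩ : Σ s, A s) = ⟨k, l⟩ with hc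
  set g1 : ℕ × ℕ → ℝ := fun q =>
    if q.1 = q.2 then (if c then (T ^ q.1) o i * π i j else 0) else 0 with hg1
  set g2 : ℕ × ℕ → ℝ := fun q =>
    if q.1 < q.2 then
      (T ^ q.1) o i * π i j * (∑ k', p i j k' * (T ^ (q.2 - q.1 - 1)) k' k) * π k l
    else 0 with hg2
  set g3 : ℕ × ℕ → ℝ := fun q =>
    if q.2 < q.1 then
      (T ^ q.2) o k * π k l * (∑ k', p k l k' * (T ^ (q.1 - q.2 - 1)) k' i) * π i j
    else 0 with hg3
  have hsplit : g = fun q => g1 q + g2 q + g3 q := by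
    funext q
    obtain ⟨t, t'⟩ := q
    rw [hg t t', hg1, hg2, hg3]
    rcases lt_trichotomy t t' with h | h | h
    · simp only [h, h.ne, if_true, if_false, h.asymm]
      ring
    · simp only [h, if_true, lt_irrefl, if_false]
      ring
    · simp only [h, h.ne', h.asymm, if_true, if_false]
      ring
  -- ### Diagonal piece
  have he1 : Function.Injective (fun t : ℕ => ((t, t) : ℕ × ℕ)) :=
    fun a b h => congrArg Prod.fst h
  have he1r : ∀ q : ℕ × ℕ, q ∉ Set.range (fun t : ℕ => ((t, t) : ℕ × ℕ)) → g1 q = 0 := by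
    rintro ⟨t, t'⟩ hq
    have : t ≠ t' := fun h => hq ⟨t, by simp [h]⟩
    simp [hg1, this]
  have h1comp : (g1 ∘ fun t : ℕ => ((t, t) : ℕ × ℕ)) =
      fun t => (if c then π i j else 0) * (T ^ t) o i := by
    funext t
    simp only [Function.comp_apply, hg1, if_pos rfl]
    split_ifs <;> ring
  have hS1 : HasSum g1 ((if c then π i j else 0) * D o i) := by
    rw [← Function.Injective.hasSum_iff he1 he1r, h1comp, hDM]
    exact (hSumP o i).hasSum.mul_left _
  -- ### Upper piece
  have hb2 : Summable fun d : ℕ => ∑ k', p i j k' * (T ^ d) k' k :=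
    summable_sum fun k' _ => (hSumP k' k).mul_left _
  have hb2t : ∑' d : ℕ, ∑ k', p i j k' * (T ^ d) k' k = E i j k := by
    rw [Summable.tsum_finsetSum fun k' _ => (hSumP k' k).mul_left _, hE]
    exact Finset.sum_congr rfl fun k' _ => by rw [tsum_mul_left, hDM]
  have he2 : Function.Injective (fun q : ℕ × ℕ => ((q.1, q.1 + q.2 + 1) : ℕ × ℕ)) := by
    intro ⟨a, b⟩ ⟨a', b'⟩ h
    simp only [Prod.mk.injEq] at h
    exact Prod.ext h.1 (by omega)
  have he2r : ∀ q : ℕ × ℕ, q ∉ Set.range (fun q : ℕ × ℕ => ((q.1, q.1 + q.2 + 1) : ℕ × ℕ)) →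
      g2 q = 0 := by
    rintro ⟨t, t'⟩ hq
    have : ¬ t < t' := fun h => hq ⟨(t, t' - t - 1), by dsimp only; rw [Prod.mk.injEq]; omega⟩
    simp [hg2, this]
  have h2comp : (g2 ∘ fun q : ℕ × ℕ => ((q.1, q.1 + q.2 + 1) : ℕ × ℕ)) =
      fun q : ℕ × ℕ => (T ^ q.1) o i *
        (π i j * π k l * ∑ k', p i j k' * (T ^ q.2) k' k) := by
    funext ⟨t, d⟩
    have ht : t < t + d + 1 := by omega
    have hd : t + d + 1 - t - 1 = d := by omega
    simp only [Function.comp_apply, hg2, ht, if_true, hd]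
    ring
  have hh2 : HasSum (fun d : ℕ => π i j * π k l * ∑ k', p i j k' * (T ^ d) k' k)
      (π i j * π k l * E i j k) := by
    rw [← hb2t]; exact hb2.hasSum.mul_left _
  have hfg2 : Summable fun q : ℕ × ℕ => (T ^ q.1) o i *
      (π i j * π k l * ∑ k', p i j k' * (T ^ q.2) k' k) :=
    (hSumP o i).mul_of_nonneg hh2.summable (fun t => hPnn t o i)
      (fun d => mul_nonneg (mul_nonneg (hπ_nonneg i j) (hπ_nonneg k l))
        (Finset.sum_nonneg fun k' _ => mul_nonneg (hp_nonneg i j k') (hPnn d k' k)))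
  have hS2 : HasSum g2 (D o i * (π i j * π k l * E i j k)) := by
    rw [← Function.Injective.hasSum_iff he2 he2r, h2comp, hDM]
    exact (hSumP o i).hasSum.mul hh2 hfg2
  -- ### Lower piece
  have hb3 : Summable fun d : ℕ => ∑ k', p k l k' * (T ^ d) k' i :=
    summable_sum fun k' _ => (hSumP k' i).mul_left _
  have hb3t : ∑' d : ℕ, ∑ k', p k l k' * (T ^ d) k' i = E k l i := by
    rw [Summable.tsum_finsetSum fun k' _ => (hSumP k' i).mul_left _, hE]
    exact Finset.sum_congr rfl fun k' _ => by rw [tsum_mul_left, hDM]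
  have he3 : Function.Injective (fun q : ℕ × ℕ => ((q.1 + q.2 + 1, q.1) : ℕ × ℕ)) := by
    intro ⟨a, b⟩ ⟨a', b'⟩ h
    simp only [Prod.mk.injEq] at h
    exact Prod.ext h.2 (by omega)
  have he3r : ∀ q : ℕ × ℕ, q ∉ Set.range (fun q : ℕ × ℕ => ((q.1 + q.2 + 1, q.1) : ℕ × ℕ)) →
      g3 q = 0 := by
    rintro ⟨t, t'⟩ hq
    have : ¬ t' < t := fun h => hq ⟨(t', t - t' - 1), by dsimp only; rw [Prod.mk.injEq]; omega⟩
    simp [hg3, this]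
  have h3comp : (g3 ∘ fun q : ℕ × ℕ => ((q.1 + q.2 + 1, q.1) : ℕ × ℕ)) =
      fun q : ℕ × ℕ => (T ^ q.1) o k *
        (π k l * π i j * ∑ k', p k l k' * (T ^ q.2) k' i) := by
    funext ⟨t, d⟩
    have ht : t < t + d + 1 := by omega
    have hd : t + d + 1 - t - 1 = d := by omega
    simp only [Function.comp_apply, hg3, ht, if_true, hd]
    ring
  have hh3 : HasSum (fun d : ℕ => π k l * π i j * ∑ k', p k l k' * (T ^ d) k' i)
      (π k l * π i j * E k l i) := by
    rw [← hb3t]; exact hb3.hasSum.mul_left _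
  have hfg3 : Summable fun q : ℕ × ℕ => (T ^ q.1) o k *
      (π k l * π i j * ∑ k', p k l k' * (T ^ q.2) k' i) :=
    (hSumP o k).mul_of_nonneg hh3.summable (fun t => hPnn t o k)
      (fun d => mul_nonneg (mul_nonneg (hπ_nonneg k l) (hπ_nonneg i j))
        (Finset.sum_nonneg fun k' _ => mul_nonneg (hp_nonneg k l k') (hPnn d k' i)))
  have hS3 : HasSum g3 (D o k * (π k l * π i j * E k l i)) := by
    rw [← Function.Injective.hasSum_iff he3 he3r, h3comp, hDM]
    exact (hSumP o k).hasSum.mul hh3 hfg3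
  -- ## Combine
  have hG : HasSum g ((if c then π i j else 0) * D o i +
      D o i * (π i j * π k l * E i j k) + D o k * (π k l * π i j * E k l i)) := by
    rw [hsplit]
    exact (hS1.add hS2).add hS3
  refine ⟨hG.summable, ?_⟩
  rw [hG.tsum_eq]
  by_cases hcc : c
  · rw [if_pos hcc, if_pos hcc]; ring
  · rw [if_neg hcc, if_neg hcc]; ring
end
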